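/- Let (X,d) be a metric space, Ω, Δ nonempty subsets of X, and Ξ : X → X a cyclic orbital contraction on Ω ∪ Δ with constant η ∈ (0,1). Fix ς₀ ∈ Ω, let ς₁ = Ξς₀, and define ς_{n+1} = Ξς_n for all n ≥ 0. Let S₀ = sup of the set {d(Ξ^i ς₀, Ξ^j ς₀) : i − j odd} ∪ {d(Ξ^k ς₁, Ξ^l ς₁) : k − l odd} ∪ {d(Ξ^p ς₀, Ξ^q ς₁) : p − q even}. Then for every n ≥ 1, d(ς_n, ς_{n+1}) ≤ η^n · S₀ + (1 − η^n) · dist(Ω,Δ). -/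

import Mathlib

open Filter Metric

theorem stmt1 {X : Type*} [MetricSpace X] (Ω Δ : Set X)
    (hΩ : Ω.Nonempty) (hΔ : Δ.Nonempty) (Ξ : X → X) (η : ℝ) (hη : η ∈ Set.Ioo (0 : ℝ) 1)
    (hcycΩ : Set.MapsTo Ξ Ω Δ) (hcycΔ : Set.MapsTo Ξ Δ Ω)
    (hbdd : ∀ x : X, Bornology.IsBounded (Set.range fun n => Ξ^[n] x))
    (hcontr : ∀ ς ∈ Ω, ∀ ϑ ∈ Δ,
      dist (Ξ ς) (Ξ ϑ) ≤ η * sSup { r : ℝ |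
      (∃ i j : ℕ, Odd ((i : ℤ) - j) ∧ r = dist (Ξ^[i] ς) (Ξ^[j] ς)) ∨
      (∃ k l : ℕ, Odd ((k : ℤ) - l) ∧ r = dist (Ξ^[k] ϑ) (Ξ^[l] ϑ)) ∨
      (∃ p q : ℕ, Even ((p : ℤ) - q) ∧ r = dist (Ξ^[p] ς) (Ξ^[q] ϑ)) }
        + (1 - η) * sInf (Set.image2 dist Ω Δ))
    (ς₀ : X) (hς₀ : ς₀ ∈ Ω) :
    ∀ n : ℕ, 1 ≤ n →
      dist (Ξ^[n] ς₀) (Ξ^[n + 1] ς₀) ≤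
        η ^ n * sSup { r : ℝ |
      (∃ i j : ℕ, Odd ((i : ℤ) - j) ∧ r = dist (Ξ^[i] ς₀) (Ξ^[j] ς₀)) ∨
      (∃ k l : ℕ, Odd ((k : ℤ) - l) ∧ r = dist (Ξ^[k] (Ξ ς₀)) (Ξ^[l] (Ξ ς₀))) ∨
      (∃ p q : ℕ, Even ((p : ℤ) - q) ∧ r = dist (Ξ^[p] ς₀) (Ξ^[q] (Ξ ς₀))) }
          + (1 - η ^ n) * sInf (Set.image2 dist Ω Δ) := by
  obtain ⟨hη0, hη1⟩ := hη
  set D : ℝ := sInf (Set.image2 dist Ω Δ) with hDdef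
  -- D is nonnegative
  have hD0 : 0 ≤ D := by
    apply Real.sInf_nonneg
    rintro r ⟨x, hx, y, hy, rfl⟩
    exact dist_nonneg
  -- a uniform bound on distances within the orbit of ς₀
  obtain ⟨C, hC⟩ := Metric.isBounded_iff.mp (hbdd ς₀)
  have hCab : ∀ a b : ℕ, dist (Ξ^[a] ς₀) (Ξ^[b] ς₀) ≤ C := fun a b =>
    hC (Set.mem_range_self a) (Set.mem_range_self b)
  -- parity of orbit points
  have hpar : ∀ m : ℕ, (Even m → Ξ^[m] ς₀ ∈ Ω) ∧ (Odd m → Ξ^[m] ς₀ ∈ Δ) := by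
    intro m
    induction m with
    | zero => exact ⟨fun _ => hς₀, fun h => absurd h (by simp)⟩
    | succ k ih =>
      rw [Function.iterate_succ_apply']
      refine ⟨fun h => ?_, fun h => ?_⟩
      · exact hcycΔ (ih.2 (Nat.not_even_iff_odd.mp (Nat.even_add_one.mp h)))
      · exact hcycΩ (ih.1 (Nat.not_odd_iff_even.mp (Nat.odd_add_one.mp h)))
  -- the family of sets of "odd-gap" orbit distances from index n on
  set P : ℕ → Set ℝ := fun n => { r : ℝ | ∃ a b : ℕ, n ≤ a ∧ n ≤ b ∧
      Odd ((a : ℤ) - b) ∧ r = dist (Ξ^[a] ς₀) (Ξ^[b] ς₀) } with hPdef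
  have hPbdd : ∀ n, BddAbove (P n) := by
    intro n
    refine ⟨C, ?_⟩
    rintro r ⟨a, b, _, _, _, rfl⟩
    exact hCab a b
  have hPmem : ∀ n, dist (Ξ^[n] ς₀) (Ξ^[n+1] ς₀) ∈ P n := by
    intro n
    exact ⟨n, n + 1, le_refl n, Nat.le_succ n, ⟨-1, by push_cast; ring⟩, rfl⟩
  have hPnonneg : ∀ n, 0 ≤ sSup (P n) :=
    fun n => le_trans dist_nonneg (le_csSup (hPbdd n) (hPmem n))
  -- key step: the contraction gives sSup (P (n+1)) ≤ η * sSup (P n) + (1-η) * D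
  have hstep : ∀ n, sSup (P (n+1)) ≤ η * sSup (P n) + (1 - η) * D := by
    intro n
    apply Real.sSup_le
    · rintro r ⟨a, b, ha, hb, hodd, rfl⟩
      obtain ⟨a', rfl⟩ : ∃ a', a = a' + 1 := ⟨a - 1, by omega⟩
      obtain ⟨b', rfl⟩ : ∃ b', b = b' + 1 := ⟨b - 1, by omega⟩
      have ha' : n ≤ a' := by omega
      have hb' : n ≤ b' := by omega
      have hodd' : Odd ((a' : ℤ) - b') := by
        obtain ⟨k, hk⟩ := hodd
        exact ⟨k, by push_cast at hk ⊢; omega⟩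
      rw [Function.iterate_succ_apply', Function.iterate_succ_apply']
      -- case on parity of a'
      rcases Nat.even_or_odd a' with hea | hoa
      · -- a' even, so b' odd: ς_{a'} ∈ Ω, ς_{b'} ∈ Δ
        have hob : Odd b' := by
          rcases Nat.even_or_odd b' with h | h
          · exfalso
            obtain ⟨k, hk⟩ := hodd'
            obtain ⟨m1, hm1⟩ := hea
            obtain ⟨m2, hm2⟩ := h
            omega
          · exact h
        have hmΩ := (hpar a').1 hea
        have hmΔ := (hpar b').2 hob
        refine le_trans (hcontr _ hmΩ _ hmΔ) ?_
        gcongr η * ?_ + _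
        apply Real.sSup_le _ (hPnonneg n)
        rintro r (⟨i, j, hij, rfl⟩ | ⟨k, l, hkl, rfl⟩ | ⟨p, q, hpq, rfl⟩)
        · rw [← Function.iterate_add_apply, ← Function.iterate_add_apply]
          refine le_csSup (hPbdd n) ⟨i + a', j + a', by omega, by omega, ?_, rfl⟩
          obtain ⟨k, hk⟩ := hij
          exact ⟨k, by push_cast at hk ⊢; omega⟩
        · rw [← Function.iterate_add_apply, ← Function.iterate_add_apply]
          refine le_csSup (hPbdd n) ⟨k + b', l + b', by omega, by omega, ?_, rfl⟩
          obtain ⟨m, hm⟩ := hkl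
          exact ⟨m, by push_cast at hm ⊢; omega⟩
        · rw [← Function.iterate_add_apply, ← Function.iterate_add_apply]
          refine le_csSup (hPbdd n) ⟨p + a', q + b', by omega, by omega, ?_, rfl⟩
          obtain ⟨m1, hm1⟩ := hpq
          obtain ⟨m2, hm2⟩ := hodd'
          exact ⟨m1 + m2, by push_cast at hm1 hm2 ⊢; omega⟩
      · -- a' odd, so b' even: ς_{b'} ∈ Ω, ς_{a'} ∈ Δ
        have heb : Even b' := by
          rcases Nat.even_or_odd b' with h | h
          · exact h
          · exfalso
            obtain ⟨k, hk⟩ := hodd'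
            obtain ⟨m1, hm1⟩ := hoa
            obtain ⟨m2, hm2⟩ := h
            omega
        have hmΩ := (hpar b').1 heb
        have hmΔ := (hpar a').2 hoa
        rw [dist_comm]
        refine le_trans (hcontr _ hmΩ _ hmΔ) ?_
        gcongr η * ?_ + _
        apply Real.sSup_le _ (hPnonneg n)
        rintro r (⟨i, j, hij, rfl⟩ | ⟨k, l, hkl, rfl⟩ | ⟨p, q, hpq, rfl⟩)
        · rw [← Function.iterate_add_apply, ← Function.iterate_add_apply]
          refine le_csSup (hPbdd n) ⟨i + b', j + b', by omega, by omega, ?_, rfl⟩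
          obtain ⟨k, hk⟩ := hij
          exact ⟨k, by push_cast at hk ⊢; omega⟩
        · rw [← Function.iterate_add_apply, ← Function.iterate_add_apply]
          refine le_csSup (hPbdd n) ⟨k + a', l + a', by omega, by omega, ?_, rfl⟩
          obtain ⟨m, hm⟩ := hkl
          exact ⟨m, by push_cast at hm ⊢; omega⟩
        · rw [← Function.iterate_add_apply, ← Function.iterate_add_apply]
          refine le_csSup (hPbdd n) ⟨p + b', q + a', by omega, by omega, ?_, rfl⟩
          obtain ⟨m1, hm1⟩ := hpq
          obtain ⟨m2, hm2⟩ := hodd'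
          exact ⟨m1 - m2 - 1, by push_cast at hm1 hm2 ⊢; omega⟩
    · exact add_nonneg (mul_nonneg hη0.le (hPnonneg n)) (mul_nonneg (by linarith) hD0)
  -- iterate the step
  have hiter : ∀ n : ℕ, sSup (P n) ≤ η ^ n * sSup (P 0) + (1 - η ^ n) * D := by
    intro n
    induction n with
    | zero => simp
    | succ k ih =>
      calc sSup (P (k+1)) ≤ η * sSup (P k) + (1 - η) * D := hstep k
        _ ≤ η * (η ^ k * sSup (P 0) + (1 - η ^ k) * D) + (1 - η) * D := by
            gcongr
        _ = η ^ (k+1) * sSup (P 0) + (1 - η ^ (k+1)) * D := by ring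
  -- relate sSup (P 0) to the sup in the statement
  set S₀ : Set ℝ := { r : ℝ |
      (∃ i j : ℕ, Odd ((i : ℤ) - j) ∧ r = dist (Ξ^[i] ς₀) (Ξ^[j] ς₀)) ∨
      (∃ k l : ℕ, Odd ((k : ℤ) - l) ∧ r = dist (Ξ^[k] (Ξ ς₀)) (Ξ^[l] (Ξ ς₀))) ∨
      (∃ p q : ℕ, Even ((p : ℤ) - q) ∧ r = dist (Ξ^[p] ς₀) (Ξ^[q] (Ξ ς₀))) } with hS₀def
  have hS₀bdd : BddAbove S₀ := by
    refine ⟨C, ?_⟩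
    rintro r (⟨i, j, _, rfl⟩ | ⟨k, l, _, rfl⟩ | ⟨p, q, _, rfl⟩)
    · exact hCab i j
    · rw [← Function.iterate_succ_apply, ← Function.iterate_succ_apply]
      exact hCab (k+1) (l+1)
    · rw [← Function.iterate_succ_apply (f := Ξ) (n := q)]
      exact hCab p (q+1)
  have hS₀nonneg : 0 ≤ sSup S₀ := by
    refine le_trans (dist_nonneg (x := Ξ^[1] ς₀) (y := Ξ^[0] ς₀)) (le_csSup hS₀bdd ?_)
    exact Or.inl ⟨1, 0, ⟨0, by ring⟩, rfl⟩
  have hP0S₀ : sSup (P 0) ≤ sSup S₀ := by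
    apply Real.sSup_le _ hS₀nonneg
    rintro r ⟨a, b, _, _, hodd, rfl⟩
    exact le_csSup hS₀bdd (Or.inl ⟨a, b, hodd, rfl⟩)
  intro n _
  calc dist (Ξ^[n] ς₀) (Ξ^[n+1] ς₀) ≤ sSup (P n) := le_csSup (hPbdd n) (hPmem n)
    _ ≤ η ^ n * sSup (P 0) + (1 - η ^ n) * D := hiter n
    _ ≤ η ^ n * sSup S₀ + (1 - η ^ n) * D := by gcongr
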